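/- Let D ⊆ [0,1] and let f : D → ℝ be summable with integral I. If I > 0, then there exists a point ξ ∈ D with f(ξ) > 0. -/

import Mathlib

open MeasureTheory Filter Set
open scoped ENNReal NNReal

noncomputable section

/-- A sequence of functions on `[0,1]` is *regular* if each member is continuous and
nonnegative on `[0,1]` and has integral over `[0,1]` strictly less than `2⁻ⁿ`. -/
def RegularSeq (h : ℕ → ℝ → ℝ) : Prop :=
  ∀ n : ℕ, ContinuousOn (h n) (Set.Icc 0 1) ∧
    (∀ x ∈ Set.Icc (0:ℝ) 1, 0 ≤ h n x) ∧
    (∫ x in (0:ℝ)..1, h n x) < (1/2 : ℝ) ^ n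

/-- The set `Ω(𝔥)` of points of `[0,1]` at which the partial sums of `∑ hₙ(x)` are
bounded above. -/
def Omega (h : ℕ → ℝ → ℝ) : Set ℝ :=
  {x ∈ Set.Icc (0:ℝ) 1 | ∃ γ : ℝ, ∀ m : ℕ, ∑ n ∈ Finset.range (m+1), h n x ≤ γ}

/-- A subset `X ⊆ [0,1]` is *almost full* if `Ω(𝔥) ⊆ X` for some regular sequence `𝔥`. -/
def AlmostFull (X : Set ℝ) : Prop :=
  ∃ h : ℕ → ℝ → ℝ, RegularSeq h ∧ Omega h ⊆ X

/-- `f : D → ℝ` is *summable with integral `I`* if there are an almost full set `Y ⊆ D`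
and continuous functions `Fₙ` on `[0,1]` with `∫₀¹ |Fₙ₊₁ - Fₙ| < 2⁻ⁿ`, `Fₙ(x) → f(x)`
on `Y`, and `∫₀¹ Fₙ → I`. -/
def SummableWithIntegral (D : Set ℝ) (f : ℝ → ℝ) (I : ℝ) : Prop :=
  ∃ (Y : Set ℝ) (F : ℕ → ℝ → ℝ),
    AlmostFull Y ∧ Y ⊆ D ∧
    (∀ n : ℕ, ContinuousOn (F n) (Set.Icc 0 1)) ∧
    (∀ n : ℕ, (∫ x in (0:ℝ)..1, |F (n+1) x - F n x|) < (1/2 : ℝ) ^ n) ∧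
    (∀ x ∈ Y, Tendsto (fun n => F n x) atTop (nhds (f x))) ∧
    Tendsto (fun n => ∫ x in (0:ℝ)..1, F n x) atTop (nhds I)

/-- If `f : D → ℝ` is summable with a strictly positive integral, then `f` is strictly
positive at some point of `D`. -/
theorem stmt9 (D : Set ℝ) (hD : D ⊆ Set.Icc 0 1) (f : ℝ → ℝ) (I : ℝ)
    (hf : SummableWithIntegral D f I) (hI : 0 < I) :
    ∃ ξ ∈ D, 0 < f ξ := by
  obtain ⟨Y, F, ⟨h, hreg, hΩ⟩, hYD, hFcont, hFdiff, hFconv, hFint⟩ := hf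
  set μ : Measure ℝ := volume.restrict (Set.Icc 0 1) with hμ
  have hInt : ∀ n, Integrable (F n) μ := fun n => (hFcont n).integrableOn_Icc
  have hIntH : ∀ n, Integrable (h n) μ := fun n => ((hreg n).1).integrableOn_Icc
  have hIntD : ∀ n, Integrable (fun x => F (n+1) x - F n x) μ :=
    fun n => (hInt (n+1)).sub (hInt n)
  have hIcc : ∀ g : ℝ → ℝ, (∫ x, g x ∂μ) = ∫ x in (0:ℝ)..1, g x := by
    intro g
    rw [intervalIntegral.integral_of_le (by norm_num : (0:ℝ) ≤ 1), hμ,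
      MeasureTheory.integral_Icc_eq_integral_Ioc]
  -- geometric bound
  have hgeo : (∑' n : ℕ, ENNReal.ofReal ((1/2:ℝ)^n)) ≠ ⊤ := by
    have heq : ∀ n : ℕ, ENNReal.ofReal ((1/2:ℝ)^n) = (2:ℝ≥0∞)⁻¹ ^ n := by
      intro n
      rw [ENNReal.ofReal_pow (by norm_num)]
      congr 1
      rw [ENNReal.ofReal_div_of_pos (by norm_num), ENNReal.ofReal_one, ENNReal.ofReal_ofNat,
        one_div]
    rw [tsum_congr heq, ENNReal.tsum_geometric, ENNReal.one_sub_inv_two]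
    simp
  -- lintegral bounds
  have hLH : ∀ n, (∫⁻ x, (‖h n x‖₊ : ℝ≥0∞) ∂μ) ≤ ENNReal.ofReal ((1/2:ℝ)^n) := by
    intro n
    rw [show (∫⁻ x, (‖h n x‖₊ : ℝ≥0∞) ∂μ) = ∫⁻ x, ‖h n x‖ₑ ∂μ from rfl,
      ← MeasureTheory.ofReal_integral_norm_eq_lintegral_enorm (hIntH n)]
    apply ENNReal.ofReal_le_ofReal
    have : (∫ x, ‖h n x‖ ∂μ) = ∫ x, h n x ∂μ := by
      refine MeasureTheory.setIntegral_congr_fun measurableSet_Icc ?_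
      intro x hx
      exact Real.norm_of_nonneg ((hreg n).2.1 x hx)
    rw [this, hIcc]
    exact le_of_lt (hreg n).2.2
  have hLD : ∀ n, (∫⁻ x, (‖F (n+1) x - F n x‖₊ : ℝ≥0∞) ∂μ) ≤ ENNReal.ofReal ((1/2:ℝ)^n) := by
    intro n
    rw [show (∫⁻ x, (‖F (n+1) x - F n x‖₊ : ℝ≥0∞) ∂μ) = ∫⁻ x, ‖F (n+1) x - F n x‖ₑ ∂μ from rfl,
      ← MeasureTheory.ofReal_integral_norm_eq_lintegral_enorm (hIntD n)]
    apply ENNReal.ofReal_le_ofReal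
    have : (∫ x, ‖F (n+1) x - F n x‖ ∂μ) = ∫ x, |F (n+1) x - F n x| ∂μ := by
      simp [Real.norm_eq_abs]
    rw [this, hIcc]
    exact le_of_lt (hFdiff n)
  have hmH : ∀ n : ℕ, AEMeasurable (fun x => (‖h n x‖₊ : ℝ≥0∞)) μ :=
    fun n => (hIntH n).aestronglyMeasurable.enorm
  have hmD : ∀ n : ℕ, AEMeasurable (fun x => (‖F (n+1) x - F n x‖₊ : ℝ≥0∞)) μ :=
    fun n => (hIntD n).aestronglyMeasurable.enorm
  -- the two tsum functions
  set GH : ℝ → ℝ≥0∞ := fun x => ∑' n : ℕ, (‖h n x‖₊ : ℝ≥0∞) with hGH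
  set GD : ℝ → ℝ≥0∞ := fun x => ∑' n : ℕ, (‖F (n+1) x - F n x‖₊ : ℝ≥0∞) with hGD
  have hGHlint : (∫⁻ x, GH x ∂μ) ≠ ⊤ := by
    rw [hGH]
    simp only []
    rw [MeasureTheory.lintegral_tsum hmH]
    exact ne_top_of_le_ne_top hgeo (ENNReal.tsum_le_tsum hLH)
  have hGDlint : (∫⁻ x, GD x ∂μ) ≠ ⊤ := by
    rw [hGD]
    simp only []
    rw [MeasureTheory.lintegral_tsum hmD]
    exact ne_top_of_le_ne_top hgeo (ENNReal.tsum_le_tsum hLD)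
  have hmGH : AEMeasurable GH μ := AEMeasurable.ennreal_tsum hmH
  have hmGD : AEMeasurable GD μ := AEMeasurable.ennreal_tsum hmD
  have haeGH : ∀ᵐ x ∂μ, GH x < ⊤ := MeasureTheory.ae_lt_top' hmGH hGHlint
  have haeGD : ∀ᵐ x ∂μ, GD x < ⊤ := MeasureTheory.ae_lt_top' hmGD hGDlint
  have haeIcc : ∀ᵐ x ∂μ, x ∈ Set.Icc (0:ℝ) 1 :=
    MeasureTheory.ae_restrict_mem measurableSet_Icc
  -- a.e. membership in Y
  have haeY : ∀ᵐ x ∂μ, x ∈ Y := by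
    filter_upwards [haeGH, haeIcc] with x hx hxI
    apply hΩ
    refine ⟨hxI, (GH x).toReal, fun m => ?_⟩
    have h1 : (∑ n ∈ Finset.range (m+1), (‖h n x‖₊ : ℝ≥0∞)) ≤ GH x :=
      ENNReal.sum_le_tsum _
    have h2 := ENNReal.toReal_mono hx.ne h1
    have h3 : (∑ n ∈ Finset.range (m+1), (‖h n x‖₊ : ℝ≥0∞)).toReal
        = ∑ n ∈ Finset.range (m+1), h n x := by
      rw [ENNReal.toReal_sum (fun a _ => ENNReal.coe_ne_top)]
      refine Finset.sum_congr rfl fun n _ => ?_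
      simp [Real.norm_of_nonneg ((hreg n).2.1 x hxI)]
    rwa [h3] at h2
  -- dominated convergence
  set B : ℝ → ℝ := fun x => |F 0 x| + (GD x).toReal with hB
  have hIntB : Integrable B μ := by
    refine ((hInt 0).abs).add ?_
    exact MeasureTheory.integrable_toReal_of_lintegral_ne_top hmGD hGDlint
  have hbound : ∀ n : ℕ, ∀ᵐ x ∂μ, ‖F n x‖ ≤ B x := by
    intro n
    filter_upwards [haeGD] with x hx
    have htel : F n x = F 0 x + ∑ k ∈ Finset.range n, (F (k+1) x - F k x) := by
      rw [Finset.sum_range_sub (fun k => F k x)]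
      ring
    have h1 : ‖F n x‖ ≤ |F 0 x| + ∑ k ∈ Finset.range n, ‖F (k+1) x - F k x‖ := by
      rw [htel, Real.norm_eq_abs]
      calc |F 0 x + ∑ k ∈ Finset.range n, (F (k+1) x - F k x)|
          ≤ |F 0 x| + |∑ k ∈ Finset.range n, (F (k+1) x - F k x)| := abs_add_le _ _
        _ ≤ |F 0 x| + ∑ k ∈ Finset.range n, ‖F (k+1) x - F k x‖ := by
            gcongr
            exact Finset.abs_sum_le_sum_abs _ _
    have h2 : (∑ k ∈ Finset.range n, ‖F (k+1) x - F k x‖) ≤ (GD x).toReal := by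
      have ha : (∑ k ∈ Finset.range n, (‖F (k+1) x - F k x‖₊ : ℝ≥0∞)) ≤ GD x :=
        ENNReal.sum_le_tsum _
      have hb := ENNReal.toReal_mono hx.ne ha
      rwa [ENNReal.toReal_sum (fun a _ => ENNReal.coe_ne_top)] at hb
      
    calc ‖F n x‖ ≤ |F 0 x| + ∑ k ∈ Finset.range n, ‖F (k+1) x - F k x‖ := h1
      _ ≤ |F 0 x| + (GD x).toReal := by linarith
  have haeconv : ∀ᵐ x ∂μ, Tendsto (fun n => F n x) atTop (nhds (f x)) := by
    filter_upwards [haeY] with x hx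
    exact hFconv x hx
  have hDCT : Tendsto (fun n => ∫ x, F n x ∂μ) atTop (nhds (∫ x, f x ∂μ)) :=
    MeasureTheory.tendsto_integral_of_dominated_convergence B
      (fun n => (hInt n).aestronglyMeasurable) hIntB hbound haeconv
  have hFI : Tendsto (fun n => ∫ x, F n x ∂μ) atTop (nhds I) := by
    simpa only [hIcc] using hFint
  have hint_f : (∫ x, f x ∂μ) = I := tendsto_nhds_unique hDCT hFI
  -- conclude
  by_contra hcon
  push_neg at hcon
  have haef : ∀ᵐ x ∂μ, f x ≤ 0 := by
    filter_upwards [haeY] with x hx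
    exact hcon x (hYD hx)
  have : (∫ x, f x ∂μ) ≤ 0 := MeasureTheory.integral_nonpos_of_ae haef
  rw [hint_f] at this
  linarith
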